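/- Let K ≥ 1 be an integer, α ∈ (0,1], and set M = ⌊K/α⌋ (so M ≥ K). Let A : ℕ → ℕ be any sequence such that for every u ≥ 1, if the residue of u modulo M (taken in {1,…,M}) belongs to {1,…,K}, then A_u equals that residue. Then for every arm index i ∈ {1,…,K} with i < M and every pair of instants s ≤ t in ℕ, the number of indices u with s < u ≤ t and A_u = i is at least ⌊(α/K)(t−s)⌋. -/

import Mathlib

open Finset

/-- The residue of `u` modulo `M`, taken in `{1, …, M}`. -/
def residueIn (u M : ℕ) : ℕ := if u % M = 0 then M else u % M

/-- **Proposition 1 (forced exploration).**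
Let `K ≥ 1`, `α ∈ (0,1]`, `M = ⌊K/α⌋`. If `A : ℕ → ℕ` plays arm `residueIn u M`
whenever this residue belongs to `{1,…,K}`, then for every arm `i ∈ {1,…,K}` with
`i < M` and all instants `s ≤ t`, the number of `u ∈ (s, t]` with `A u = i` is at
least `⌊(α/K)(t−s)⌋`. -/
theorem forced_exploration
    (K : ℕ) (hK : 1 ≤ K) (α : ℝ) (hα0 : 0 < α) (hα1 : α ≤ 1)
    (M : ℕ) (hM : M = ⌊(K : ℝ) / α⌋₊)
    (A : ℕ → ℕ)
    (hA : ∀ u : ℕ, 1 ≤ u → residueIn u M ≤ K → A u = residueIn u M)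
    (i : ℕ) (hi1 : 1 ≤ i) (hiK : i ≤ K) (hiM : i < M)
    (s t : ℕ) (hst : s ≤ t) :
    ⌊(α / K) * ((t - s : ℕ) : ℝ)⌋₊ ≤ ((Ioc s t).filter (fun u => A u = i)).card := by
  have hK0 : (0:ℝ) < K := by exact_mod_cast hK
  have hKM : K ≤ M := by
    have h1 : (K:ℝ) ≤ (K:ℝ)/α := by
      rw [le_div_iff₀ hα0]; nlinarith
    calc K = ⌊((K:ℕ):ℝ)⌋₊ := (Nat.floor_natCast K).symm
    _ ≤ ⌊(K:ℝ)/α⌋₊ := Nat.floor_le_floor h1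
    _ = M := hM.symm
  have hM1 : 1 ≤ M := le_trans hK hKM
  have hM0 : (0:ℝ) < M := by exact_mod_cast hM1
  set n := t - s with hn
  set q := n / M with hq
  -- arithmetic part: ⌊(α/K) n⌋ ≤ n / M
  have hMle : (M:ℝ) ≤ (K:ℝ)/α := by
    rw [hM]; exact Nat.floor_le (by positivity)
  have hfloor : ⌊(α / K) * (n:ℝ)⌋₊ ≤ q := by
    have hαM : α * M ≤ K := by
      have h := mul_le_mul_of_nonneg_left hMle (le_of_lt hα0)
      rwa [mul_div_cancel₀ _ (ne_of_gt hα0)] at h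
    have h1 : (α/K) * (n:ℝ) ≤ (n:ℝ)/(M:ℝ) := by
      rw [div_mul_eq_mul_div, div_le_div_iff₀ hK0 hM0]
      have hn0 : (0:ℝ) ≤ (n:ℝ) := Nat.cast_nonneg n
      nlinarith
    calc ⌊(α/K)*(n:ℝ)⌋₊ ≤ ⌊(n:ℝ)/(M:ℝ)⌋₊ := Nat.floor_le_floor h1
    _ = n / M := by rw [Nat.floor_div_natCast, Nat.floor_natCast]
  refine le_trans hfloor ?_
  -- combinatorial part: at least q = n / M hits in (s, t]
  set sm := s % M with hsm
  have hsmM : sm < M := Nat.mod_lt s hM1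
  set b := i + M - 1 - sm with hb
  set r := b % M + 1 with hr
  have hrM : r ≤ M := Nat.mod_lt b hM1
  set f : ℕ → ℕ := fun j => s + j * M + r with hf
  have hmod : ∀ j, f j % M = i := by
    intro j
    have hj0 : j * M ≡ 0 [MOD M] := (Nat.modEq_zero_iff_dvd).mpr ⟨j, mul_comm j M⟩
    have h2 : f j ≡ sm + 0 + (b + 1) [MOD M] :=
      ((Nat.mod_modEq s M).symm.add hj0).add ((Nat.mod_modEq b M).add_right 1)
    have h3 : sm + 0 + (b + 1) = i + M := by omega
    have h4 : f j % M = (i + M) % M := by rw [← h3]; exact h2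
    rw [h4, Nat.add_mod_right, Nat.mod_eq_of_lt hiM]
  have hmaps : ∀ j ∈ range q, f j ∈ (Ioc s t).filter (fun u => A u = i) := by
    intro j hj
    rw [mem_range] at hj
    have hjM : (j + 1) * M ≤ n := by
      calc (j+1)*M ≤ q * M := Nat.mul_le_mul_right M hj
      _ ≤ n := Nat.div_mul_le_self n M
    have hjM' : j * M + M ≤ n := by rw [add_one_mul] at hjM; exact hjM
    have hmem : f j ∈ Ioc s t := by
      simp only [mem_Ioc, hf]
      constructor
      · omega
      · omega
    rw [mem_filter]
    refine ⟨hmem, ?_⟩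
    have h1 : 1 ≤ f j := by simp only [hf]; omega
    have hres : residueIn (f j) M = i := by
      rw [residueIn, hmod j, if_neg (by omega)]
    rw [hA (f j) h1 (by rw [hres]; exact hiK), hres]
  have hinj : Set.InjOn f (range q) := by
    intro j1 _ j2 _ h
    simp only [hf] at h
    have : j1 * M = j2 * M := by omega
    exact Nat.eq_of_mul_eq_mul_right hM1 this
  calc q = (range q).card := (card_range q).symm
  _ ≤ _ := card_le_card_of_injOn f hmaps hinj
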